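/- For every positive integer n, Σ_{i=0}^{n} |K_i(⌊n/2⌋, n)| = Σ_{i=0}^{n} |K_i(⌈n/2⌉, n)| = 2^{⌈n/2⌉}. -/

import Mathlib

open Finset Polynomial

def K (i k n : ℕ) : ℤ :=
  ∑ j ∈ Finset.range (i + 1), (-1) ^ j * (Nat.choose k j) * (Nat.choose (n - k) (i - j))

lemma coeff_one_sub_X_pow (k j : ℕ) :
    ((1 - X : ℤ[X]) ^ k).coeff j = (-1) ^ j * (Nat.choose k j : ℤ) := by
  have h : (1 - X : ℤ[X]) = C (-1) * (X + C (-1)) := by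
    simp [mul_add, ← Polynomial.C_mul]; ring
  rw [h, mul_pow, ← Polynomial.C_pow, Polynomial.coeff_C_mul, Polynomial.coeff_X_add_C_pow]
  rcases le_or_gt j k with hle | hlt
  · obtain ⟨d, rfl⟩ := Nat.exists_eq_add_of_le hle
    have : j + d - j = d := by omega
    rw [this, pow_add]
    ring_nf
    rw [pow_mul']
    norm_num
  · simp [Nat.choose_eq_zero_of_lt hlt]

lemma K_eq_coeff (i k n : ℕ) :
    K i k n = ((1 - X : ℤ[X]) ^ k * (1 + X) ^ (n - k)).coeff i := by
  rw [Polynomial.coeff_mul, Finset.Nat.sum_antidiagonal_eq_sum_range_succ_mk]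
  unfold K
  refine Finset.sum_congr rfl fun j hj => ?_
  rw [coeff_one_sub_X_pow, Polynomial.coeff_one_add_X_pow]

lemma coeff_one_sub_X_sq_pow (m i : ℕ) :
    ((1 - X ^ 2 : ℤ[X]) ^ m).coeff i =
      if i % 2 = 0 then (-1) ^ (i / 2) * (Nat.choose m (i / 2) : ℤ) else 0 := by
  have h : ((1 - X ^ 2 : ℤ[X]) ^ m) = (Polynomial.expand ℤ 2) ((1 - X) ^ m) := by
    simp [map_pow]
  rw [h, Polynomial.coeff_expand (by norm_num : 0 < 2), coeff_one_sub_X_pow]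
  rcases Nat.even_or_odd i with he | ho
  · rw [if_pos (even_iff_two_dvd.mp he), if_pos (Nat.even_iff.mp he)]
  · obtain ⟨t, rfl⟩ := ho
    rw [if_neg (by omega), if_neg (by omega)]

lemma coeff_mul_one_add (p : ℤ[X]) (i : ℕ) :
    (p * (1 + X)).coeff i = p.coeff i + if i = 0 then 0 else p.coeff (i - 1) := by
  rw [mul_add, mul_one, Polynomial.coeff_add]
  cases i with
  | zero => simp
  | succ i => simp [Polynomial.coeff_mul_X]

lemma coeff_mul_one_sub (p : ℤ[X]) (i : ℕ) :
    (p * (1 - X)).coeff i = p.coeff i - if i = 0 then 0 else p.coeff (i - 1) := by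
  rw [mul_sub, mul_one, Polynomial.coeff_sub]
  cases i with
  | zero => simp
  | succ i => simp [Polynomial.coeff_mul_X]

lemma abs_odd_case (m i : ℕ) (e : ℤ) (he : e = 1 ∨ e = -1) :
    |((1 - X ^ 2 : ℤ[X]) ^ m).coeff i +
      e * (if i = 0 then 0 else ((1 - X ^ 2 : ℤ[X]) ^ m).coeff (i - 1))| =
      (Nat.choose m (i / 2) : ℤ) := by
  rw [coeff_one_sub_X_sq_pow, coeff_one_sub_X_sq_pow]
  rcases Nat.even_or_odd i with ⟨t, rfl⟩ | ⟨t, rfl⟩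
  · rcases Nat.eq_zero_or_pos t with rfl | ht
    · simp
    · rw [if_pos (by omega), if_neg (by omega : ¬ (t + t = 0)),
        if_neg (by omega : ¬ ((t + t - 1) % 2 = 0))]
      have h2 : (t + t) / 2 = t := by omega
      rw [h2, mul_zero, add_zero]
      simp [abs_mul, abs_pow]
  · rw [if_neg (by omega), if_neg (by omega : ¬ (2 * t + 1 = 0)), if_pos (by omega)]
    have h1 : (2 * t + 1 - 1) / 2 = t := by omega
    have h2 : (2 * t + 1) / 2 = t := by omega
    rw [h1, h2, zero_add]
    rcases he with rfl | rfl <;> simp [abs_mul, abs_pow]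

lemma mySumPair (h : ℕ → ℤ) (m : ℕ) :
    ∑ i ∈ Finset.range (2 * m + 2), h i =
      ∑ r ∈ Finset.range (m + 1), (h (2 * r) + h (2 * r + 1)) := by
  induction m with
  | zero => simp [Finset.sum_range_succ]
  | succ m ih =>
    have h1 : 2 * (m + 1) + 2 = (2 * m + 2) + 1 + 1 := by ring
    rw [h1, Finset.sum_range_succ, Finset.sum_range_succ, ih]
    conv_rhs => rw [Finset.sum_range_succ]
    have h2 : 2 * (m + 1) = 2 * m + 2 := by ring
    rw [h2, show 2 * m + 2 + 1 = 2 * m + 3 from rfl]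
    ring

lemma sum_choose_cast (m : ℕ) :
    ∑ r ∈ Finset.range (m + 1), (Nat.choose m r : ℤ) = 2 ^ m := by
  rw [← Nat.cast_sum, Nat.sum_range_choose]
  push_cast
  ring

theorem stmt12 (n : ℕ) (hpos : 0 < n) :
    ∑ i ∈ Finset.range (n + 1), |K i (n / 2) n| = 2 ^ ((n + 1) / 2) ∧
    ∑ i ∈ Finset.range (n + 1), |K i ((n + 1) / 2) n| = 2 ^ ((n + 1) / 2) := by
  rcases Nat.even_or_odd n with ⟨m, rfl⟩ | ⟨m, rfl⟩
  · -- n = m + m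
    have hk1 : (m + m) / 2 = m := by omega
    have hk2 : (m + m + 1) / 2 = m := by omega
    rw [hk1, hk2]
    have key : ∀ i, |K i m (m + m)| =
        if i % 2 = 0 then (Nat.choose m (i / 2) : ℤ) else 0 := by
      intro i
      rw [K_eq_coeff]
      have hmm : m + m - m = m := by omega
      rw [hmm]
      have hfac : ((1 - X : ℤ[X]) ^ m * (1 + X) ^ m) = (1 - X ^ 2) ^ m := by
        rw [← mul_pow]; ring_nf
      rw [hfac, coeff_one_sub_X_sq_pow]
      split <;> simp [abs_mul, abs_pow]
    have main : ∑ i ∈ Finset.range (m + m + 1), |K i m (m + m)| = 2 ^ m := by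
      set g : ℕ → ℤ := fun i => if i % 2 = 0 then (Nat.choose m (i / 2) : ℤ) else 0 with hg
      rw [Finset.sum_congr rfl (fun i _ => key i)]
      have hsp := mySumPair g m
      have hmod : (m + m + 1) % 2 = 1 := by omega
      have hlast : g (m + m + 1) = 0 := by simp [hg, hmod]
      have hr : 2 * m + 2 = (m + m + 1) + 1 := by ring
      rw [hr, Finset.sum_range_succ] at hsp
      rw [hlast, add_zero] at hsp
      calc (∑ i ∈ Finset.range (m + m + 1), g i)
          = ∑ r ∈ Finset.range (m + 1), (g (2 * r) + g (2 * r + 1)) := hsp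
        _ = ∑ r ∈ Finset.range (m + 1), (Nat.choose m r : ℤ) := by
            refine Finset.sum_congr rfl fun r _ => ?_
            have e1 : g (2 * r) = (Nat.choose m r : ℤ) := by
              simp [hg, Nat.mul_div_cancel_left, Nat.mul_mod_right]
            have e2 : g (2 * r + 1) = 0 := by simp [hg, Nat.mul_add_mod]
            rw [e1, e2, add_zero]
        _ = 2 ^ m := sum_choose_cast m
    exact ⟨main, main⟩
  · -- n = 2 * m + 1
    have hk1 : (2 * m + 1) / 2 = m := by omega
    have hk2 : (2 * m + 1 + 1) / 2 = m + 1 := by omega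
    rw [hk1, hk2]
    have hfac0 : ((1 - X : ℤ[X]) ^ m * (1 + X) ^ m) = (1 - X ^ 2) ^ m := by
      rw [← mul_pow]; ring_nf
    have key1 : ∀ i, |K i m (2 * m + 1)| = (Nat.choose m (i / 2) : ℤ) := by
      intro i
      rw [K_eq_coeff]
      have hmm : 2 * m + 1 - m = m + 1 := by omega
      rw [hmm]
      have hfac : ((1 - X : ℤ[X]) ^ m * (1 + X) ^ (m + 1)) = (1 - X ^ 2) ^ m * (1 + X) := by
        rw [pow_succ, ← mul_assoc, hfac0]
      rw [hfac, coeff_mul_one_add]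
      have h := abs_odd_case m i 1 (Or.inl rfl)
      rw [one_mul] at h
      exact h
    have key2 : ∀ i, |K i (m + 1) (2 * m + 1)| = (Nat.choose m (i / 2) : ℤ) := by
      intro i
      rw [K_eq_coeff]
      have hmm : 2 * m + 1 - (m + 1) = m := by omega
      rw [hmm]
      have hfac : ((1 - X : ℤ[X]) ^ (m + 1) * (1 + X) ^ m) = (1 - X ^ 2) ^ m * (1 - X) := by
        rw [pow_succ, mul_comm ((1 - X : ℤ[X]) ^ m) (1 - X), mul_assoc, hfac0]
        ring
      rw [hfac, coeff_mul_one_sub]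
      have := abs_odd_case m i (-1) (Or.inr rfl)
      rw [neg_one_mul] at this
      rw [sub_eq_add_neg]
      exact this
    have sumv : ∑ i ∈ Finset.range (2 * m + 1 + 1), (Nat.choose m (i / 2) : ℤ) = 2 ^ (m + 1) := by
      rw [show 2 * m + 1 + 1 = 2 * m + 2 from rfl, mySumPair]
      have : ∀ r ∈ Finset.range (m + 1),
          ((Nat.choose m ((2 * r) / 2) : ℤ) + (Nat.choose m ((2 * r + 1) / 2) : ℤ))
            = 2 * (Nat.choose m r : ℤ) := by
        intro r _
        have e1 : (2 * r) / 2 = r := by omega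
        have e2 : (2 * r + 1) / 2 = r := by omega
        rw [e1, e2]; ring
      rw [Finset.sum_congr rfl this, ← Finset.mul_sum, sum_choose_cast]
      ring
    constructor
    · rw [Finset.sum_congr rfl (fun i _ => key1 i)]; exact sumv
    · rw [Finset.sum_congr rfl (fun i _ => key2 i)]; exact sumv
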